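/- (Pseudomixing property.) Let G ≤ Aut(T) be a mixing closed group with delay constant N = N(m). Then for every n, m ≥ 1, every vertex v with |v| ≥ n + N, and every A ⊆ π_n(G) and B ⊆ π_m(G), writing v = uw with |u| = n, one has μ_G(C_A ∩ 𝒯_v^{-1}(C_B) ∩ 𝒯_u^{-1}(st_G(w))) = μ_G(C_A) · μ_G(C_B) · μ_G(st_G(w)). In particular μ_G(C_A ∩ 𝒯_v^{-1}(C_B) | 𝒯_u^{-1}(st_G(w))) = μ_G(C_A) · μ_G(C_B). -/

import Mathlib

open MeasureTheory

namespace ArbGal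

/-- Vertices of the `d`-regular rooted tree: the free monoid on `{0, …, d-1}`. -/
abbrev V (d : ℕ) := List (Fin d)

instance (d : ℕ) : TopologicalSpace (V d) := ⊥

/-- A permutation of the vertices is an automorphism of the rooted tree iff it
preserves the level of vertices and the prefix (ancestor) relation. -/
def IsTreeAut {d : ℕ} (g : Equiv.Perm (V d)) : Prop :=
  (∀ v : V d, (g v).length = v.length) ∧ ∀ u v : V d, u <+: v → g u <+: g v

/-- The automorphism group `Aut(T)` of the `d`-regular rooted tree, realized as a
subgroup of the permutation group of the set of vertices. -/
def treeAutGroup (d : ℕ) : Subgroup (Equiv.Perm (V d)) where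
  carrier := {g | IsTreeAut g}
  one_mem' := ⟨fun _ => rfl, fun _ _ h => h⟩
  mul_mem' := by
    rintro a b ⟨ha1, ha2⟩ ⟨hb1, hb2⟩
    refine ⟨fun v => ?_, fun u v h => ?_⟩
    · simp only [Equiv.Perm.mul_apply, ha1, hb1]
    · simpa only [Equiv.Perm.mul_apply] using ha2 _ _ (hb2 _ _ h)
  inv_mem' := by
    rintro g ⟨h1, h2⟩
    have hlen : ∀ v : V _, (g⁻¹ v).length = v.length := by
      intro v
      have := h1 (g⁻¹ v)
      rw [(id (Equiv.apply_symm_apply g _) : g (g⁻¹ _) = _)] at this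
      exact this.symm
    refine ⟨hlen, fun u v huv => ?_⟩
    have h3 : (g⁻¹ v).take (g⁻¹ u).length <+: g⁻¹ v := List.take_prefix _ _
    have h4 : g ((g⁻¹ v).take (g⁻¹ u).length) <+: g (g⁻¹ v) := h2 _ _ h3
    rw [(id (Equiv.apply_symm_apply g _) : g (g⁻¹ _) = _)] at h4
    have hlen4 : (g ((g⁻¹ v).take (g⁻¹ u).length)).length = u.length := by
      rw [h1, List.length_take, hlen, hlen]
      exact min_eq_left huv.length_le
    have h5 : g ((g⁻¹ v).take (g⁻¹ u).length) = u := by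
      rcases List.prefix_or_prefix_of_prefix h4 huv with h | h
      · exact h.eq_of_length hlen4
      · exact (h.eq_of_length hlen4.symm).symm
    have h6 : (g⁻¹ v).take (g⁻¹ u).length = g⁻¹ u := by
      apply g.injective
      rw [h5, (id (Equiv.apply_symm_apply g _) : g (g⁻¹ _) = _)]
    rw [← h6]
    exact List.take_prefix _ _

/-- The group `Aut(T)`, as a type. -/
abbrev AutT (d : ℕ) := ↥(treeAutGroup d)

/-- `Aut(T)` carries the congruence topology, i.e. the topology of pointwise
convergence on the (discrete) set of vertices. -/
instance (d : ℕ) : TopologicalSpace (Equiv.Perm (V d)) :=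
  TopologicalSpace.induced (fun g => (g : V d → V d)) Pi.topologicalSpace

variable {d : ℕ}

lemma autT_len (g : AutT d) (v : V d) : ((g : Equiv.Perm (V d)) v).length = v.length := g.2.1 v

lemma autT_prefix (g : AutT d) {u v : V d} (h : u <+: v) :
    (g : Equiv.Perm (V d)) u <+: (g : Equiv.Perm (V d)) v := g.2.2 u v h

/-- The underlying function of the section `g|_v`. -/
def secFun (g : AutT d) (v w : V d) : V d := ((g : Equiv.Perm (V d)) (v ++ w)).drop v.length

lemma sec_spec (g : AutT d) (v w : V d) :
    (g : Equiv.Perm (V d)) (v ++ w) = (g : Equiv.Perm (V d)) v ++ secFun g v w := by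
  have h1 : (g : Equiv.Perm (V d)) v <+: (g : Equiv.Perm (V d)) (v ++ w) :=
    autT_prefix g (List.prefix_append v w)
  have h2 := autT_len g v
  have h3 : (g : Equiv.Perm (V d)) v = ((g : Equiv.Perm (V d)) (v ++ w)).take v.length := by
    rw [← h2]; exact List.prefix_iff_eq_take.mp h1
  conv_lhs => rw [← List.take_append_drop v.length ((g : Equiv.Perm (V d)) (v ++ w))]
  rw [← h3]; rfl

lemma coe_inv (g : AutT d) : ((g⁻¹ : AutT d) : Equiv.Perm (V d)) = (g : Equiv.Perm (V d))⁻¹ := rfl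

lemma sec_spec' (g : AutT d) (v w : V d) :
    (g : Equiv.Perm (V d)) (v ++ w)
      = (g : Equiv.Perm (V d)) v ++ List.drop v.length ((g : Equiv.Perm (V d)) (v ++ w)) :=
  sec_spec g v w

/-- The section (state) `g|_v` of a tree automorphism `g` at the vertex `v`; it is
the unique automorphism satisfying `g(v·w) = g(v)·(g|_v)(w)` for all `w`. -/
def sectionAt (g : AutT d) (v : V d) : AutT d :=
  ⟨{ toFun := secFun g v
     invFun := secFun g⁻¹ ((g : Equiv.Perm (V d)) v)
     left_inv := by
       intro w
       show secFun g⁻¹ ((g : Equiv.Perm (V d)) v) (secFun g v w) = w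
       unfold secFun
       rw [coe_inv, ← sec_spec' g v w, (id (Equiv.symm_apply_apply (g : Equiv.Perm (V d)) _) : (g : Equiv.Perm (V d))⁻¹ ((g : Equiv.Perm (V d)) _) = _), autT_len, List.drop_left]
     right_inv := by
       intro w
       show secFun g v (secFun g⁻¹ ((g : Equiv.Perm (V d)) v) w) = w
       unfold secFun
       rw [coe_inv]
       have h := sec_spec' g⁻¹ ((g : Equiv.Perm (V d)) v) w
       rw [coe_inv, (id (Equiv.symm_apply_apply (g : Equiv.Perm (V d)) _) : (g : Equiv.Perm (V d))⁻¹ ((g : Equiv.Perm (V d)) _) = _)] at h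
       rw [← h, (id (Equiv.apply_symm_apply (g : Equiv.Perm (V d)) _) : (g : Equiv.Perm (V d)) ((g : Equiv.Perm (V d))⁻¹ _) = _), ← autT_len g v, List.drop_left] },
   by
     constructor
     · intro w
       show (secFun g v w).length = w.length
       unfold secFun
       rw [List.length_drop, autT_len, List.length_append]
       omega
     · intro u w huw
       show secFun g v u <+: secFun g v w
       have h1 : v ++ u <+: v ++ w := by
         obtain ⟨c, rfl⟩ := huw
         rw [← List.append_assoc]
         exact List.prefix_append _ _
       have h2 := autT_prefix g h1
       rw [sec_spec g v u, sec_spec g v w] at h2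
       obtain ⟨c, hc⟩ := h2
       rw [List.append_assoc] at hc
       exact ⟨c, List.append_cancel_left hc⟩⟩

/-- The pointwise stabilizer `St(n)` of the `n`-th level, as a subgroup of `Aut(T)`. -/
def levelStab (d n : ℕ) : Subgroup (AutT d) where
  carrier := {g | ∀ v : V d, v.length = n → (g : Equiv.Perm (V d)) v = v}
  one_mem' := fun _ _ => rfl
  mul_mem' := by
    rintro a b ha hb v hv
    show (a : Equiv.Perm (V d)) ((b : Equiv.Perm (V d)) v) = v
    rw [hb v hv, ha v hv]
  inv_mem' := by
    intro g hg v hv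
    show (g : Equiv.Perm (V d))⁻¹ v = v
    conv_lhs => rw [← hg v hv]
    exact Equiv.symm_apply_apply _ _

/-- Two automorphisms agree on the truncated tree `T^m` (have the same image
under `π_m`). -/
def truncEq (d : ℕ) (m : ℕ) (g h : AutT d) : Prop :=
  ∀ w : V d, w.length ≤ m → (g : Equiv.Perm (V d)) w = (h : Equiv.Perm (V d)) w

/-- `St_G(n)_v^m = π_m(G)`: the projection of the `n`-th level stabilizer of `G`
at the vertex `v`, truncated at depth `m`, coincides with `π_m(G)`. -/
def SectModEq (d : ℕ) (G : Subgroup (AutT d)) (n m : ℕ) (v : V d) : Prop :=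
  ∀ a : AutT d,
    (∃ g, g ∈ G ∧ g ∈ levelStab d n ∧ (g : Equiv.Perm (V d)) v = v ∧
        truncEq d m (sectionAt g v) a)
    ↔ (∃ b ∈ G, truncEq d m b a)

/-- `G` is self-similar: all sections of elements of `G` belong to `G`. -/
def SelfSimilar (d : ℕ) (G : Subgroup (AutT d)) : Prop :=
  ∀ g ∈ G, ∀ v : V d, sectionAt g v ∈ G

/-- `G` is level-transitive. -/
def LevelTrans (d : ℕ) (G : Subgroup (AutT d)) : Prop :=
  ∀ v w : V d, v.length = w.length → ∃ g ∈ G, (g : Equiv.Perm (V d)) v = w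

/-- `G` is fractal: self-similar, level-transitive, and every projection
`G_v = φ_v(st_G(v))` is all of `G`. -/
def Fractal (d : ℕ) (G : Subgroup (AutT d)) : Prop :=
  SelfSimilar d G ∧ LevelTrans d G ∧
    ∀ v : V d, ∀ h ∈ G, ∃ g ∈ G, (g : Equiv.Perm (V d)) v = v ∧ sectionAt g v = h

/-- For every `n ≥ 1`, the level stabilizer `St_G(n)` acts level-transitively on the
subtrees rooted at the vertices of level `n`. -/
def StabLevelTrans (d : ℕ) (G : Subgroup (AutT d)) : Prop :=
  ∀ n : ℕ, 1 ≤ n → ∀ v u w : V d, v.length = n → u.length = w.length →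
    ∃ g ∈ G ⊓ levelStab d n, (g : Equiv.Perm (V d)) (v ++ u) = v ++ w

/-- A fractal group `G ≤ Aut(T)` is mixing with delay constant `N`. -/
def MixingWithDelay (d : ℕ) (G : Subgroup (AutT d)) (N : ℕ) : Prop :=
  Fractal d G ∧ StabLevelTrans d G ∧
    ∀ m : ℕ, 1 ≤ m → ∀ n : ℕ, 1 ≤ n → ∀ v : V d, n + N ≤ v.length → SectModEq d G n m v

/-- A fractal group `G ≤ Aut(T)` is mixing: its level stabilizers act
level-transitively below their level, and for all `n, m ≥ 1` there is a delay
`N = N(m)` with `St_G(n)_v^m = π_m(G)` whenever `|v| ≥ n + N`. -/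
def Mixing (d : ℕ) (G : Subgroup (AutT d)) : Prop :=
  Fractal d G ∧ StabLevelTrans d G ∧
    ∀ m : ℕ, 1 ≤ m → ∃ N : ℕ,
      ∀ n : ℕ, 1 ≤ n → ∀ v : V d, n + N ≤ v.length → SectModEq d G n m v

/-- `g` fixes an end of the tree `T`, i.e. an infinite rooted path. -/
def FixesEnd (d : ℕ) (g : AutT d) : Prop :=
  ∃ ω : ℕ → Fin d, ∀ n : ℕ,
    (g : Equiv.Perm (V d)) (List.ofFn (fun i : Fin n => ω i)) = List.ofFn (fun i : Fin n => ω i)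

/-- `X_n(g)`: the number of vertices of level `n` fixed by `g`. -/
noncomputable def Xfix (d n : ℕ) (g : AutT d) : ℕ :=
  Set.ncard {w : Fin n → Fin d |
    (g : Equiv.Perm (V d)) (List.ofFn w) = List.ofFn w}

/-- The Borel σ-algebra on a closed subgroup of `Aut(T)`. -/
instance (d : ℕ) (G : Subgroup (AutT d)) : MeasurableSpace ↥G := borel ↥G

/-- The fixed-point process `{X_n}` of `G`, with respect to the measure `μ` on `G`,
is a martingale. -/
def FPMartingale (d : ℕ) (G : Subgroup (AutT d)) (μ : Measure ↥G) : Prop :=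
  (∀ n : ℕ, 1 ≤ n → Integrable (fun g : ↥G => (Xfix d n (g : AutT d) : ℝ)) μ) ∧
  ∀ n : ℕ, 1 ≤ n → ∀ t : ℕ → ℝ,
    μ {g : ↥G | ∀ i, 1 ≤ i → i ≤ n → (Xfix d i (g : AutT d) : ℝ) = t i} ≠ 0 →
    ∫ g in {g : ↥G | ∀ i, 1 ≤ i → i ≤ n → (Xfix d i (g : AutT d) : ℝ) = t i},
        (Xfix d (n + 1) (g : AutT d) : ℝ) ∂μ
      = t n * (μ {g : ↥G | ∀ i, 1 ≤ i → i ≤ n → (Xfix d i (g : AutT d) : ℝ) = t i}).toReal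


/-- The cone set `C_A = π_n⁻¹(A)` determined by a set `A` of elements of `G`
(states at depth `n`). -/
def coneSet (d : ℕ) (G : Subgroup (AutT d)) (n : ℕ) (A : Set (AutT d)) : Set (AutT d) :=
  {x | x ∈ G ∧ ∃ a ∈ A, truncEq d n x a}

/-- The stabilizer `st_G(w)` of a vertex, as a subset of `Aut(T)`. -/
def vertexStabSet (d : ℕ) (G : Subgroup (AutT d)) (w : V d) : Set (AutT d) :=
  {x | x ∈ G ∧ (x : Equiv.Perm (V d)) w = w}

/-- Preimage under the section operator `𝒯_v : g ↦ g|_v`. -/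
def secPre (d : ℕ) (v : V d) (S : Set (AutT d)) : Set (AutT d) :=
  {x | sectionAt x v ∈ S}

section Infra

variable {d : ℕ}

open scoped ENNReal

/-! ### Basic application lemmas -/

/-- Evaluation of an element of a closed subgroup at a vertex. -/
def ev {G : Subgroup (AutT d)} (x : ↥G) (ω : V d) : V d :=
  ((x : AutT d) : Equiv.Perm (V d)) ω

lemma mul_apply (a b : AutT d) (ω : V d) :
    ((a * b : AutT d) : Equiv.Perm (V d)) ω
      = (a : Equiv.Perm (V d)) ((b : Equiv.Perm (V d)) ω) := rfl

lemma inv_apply (a : AutT d) (ω : V d) :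
    ((a⁻¹ : AutT d) : Equiv.Perm (V d)) ω = (a : Equiv.Perm (V d))⁻¹ ω := rfl

lemma one_apply (ω : V d) : ((1 : AutT d) : Equiv.Perm (V d)) ω = ω := rfl

lemma ev_mul {G : Subgroup (AutT d)} (x y : ↥G) (ω : V d) :
    ev (x * y) ω = ((x : AutT d) : Equiv.Perm (V d)) (ev y ω) := rfl

/-- Section application. -/
lemma sectionAt_apply (g : AutT d) (v ω : V d) :
    ((sectionAt g v : AutT d) : Equiv.Perm (V d)) ω = secFun g v ω := rfl

lemma secFun_length (g : AutT d) (v ω : V d) : (secFun g v ω).length = ω.length := by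
  have := autT_len (sectionAt g v) ω
  rwa [sectionAt_apply] at this

lemma secFun_mul (a b : AutT d) (v ω : V d) :
    secFun (a * b) v ω
      = secFun a ((b : Equiv.Perm (V d)) v) (secFun b v ω) := by
  have e0 : secFun (a * b) v ω
      = List.drop v.length ((a : Equiv.Perm (V d)) ((b : Equiv.Perm (V d)) (v ++ ω))) := rfl
  rw [e0, sec_spec b v ω, sec_spec a ((b : Equiv.Perm (V d)) v) (secFun b v ω)]
  conv_lhs => rw [show v.length = ((a : Equiv.Perm (V d)) ((b : Equiv.Perm (V d)) v)).length from
    (by rw [autT_len, autT_len])]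
  exact List.drop_left

/-! ### truncEq basics -/

lemma truncEq_refl (L : ℕ) (g : AutT d) : truncEq d L g g := fun _ _ => rfl

lemma truncEq_symm {L : ℕ} {g h : AutT d} (h1 : truncEq d L g h) : truncEq d L h g :=
  fun ω hω => (h1 ω hω).symm

lemma truncEq_trans {L : ℕ} {g h k : AutT d} (h1 : truncEq d L g h)
    (h2 : truncEq d L h k) : truncEq d L g k :=
  fun ω hω => (h1 ω hω).trans (h2 ω hω)

lemma truncEq_mul_left_iff {L : ℕ} (g x y : AutT d) :
    truncEq d L (g * x) (g * y) ↔ truncEq d L x y := by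
  constructor
  · intro h ω hω
    have := h ω hω
    rw [mul_apply, mul_apply] at this
    exact (g : Equiv.Perm (V d)).injective this
  · intro h ω hω
    rw [mul_apply, mul_apply, h ω hω]

lemma truncEq_mul_inv_iff {L : ℕ} (h q b : AutT d) :
    truncEq d L (h * q) b ↔ truncEq d L q (h⁻¹ * b) := by
  have := truncEq_mul_left_iff (L := L) h q (h⁻¹ * b)
  rw [show h * (h⁻¹ * b) = b by group] at this
  exact this

/-- An element of the `n`-th level stabilizer fixes every word of length at most `n`. -/
lemma levelStab_fixes {n : ℕ} {g : AutT d} (hg : g ∈ levelStab d n) (hd : 1 ≤ d)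
    {ω : V d} (hω : ω.length ≤ n) : (g : Equiv.Perm (V d)) ω = ω := by
  set ω' : V d := ω ++ List.replicate (n - ω.length) ⟨0, hd⟩ with hω'
  have hlen' : ω'.length = n := by
    simp [hω', List.length_replicate]
    omega
  have hfix : (g : Equiv.Perm (V d)) ω' = ω' := hg ω' hlen'
  have hpre : ω <+: ω' := List.prefix_append _ _
  have h2 : (g : Equiv.Perm (V d)) ω <+: ω' := by
    have := autT_prefix g hpre
    rwa [hfix] at this
  have h3 : (g : Equiv.Perm (V d)) ω = ω'.take ((g : Equiv.Perm (V d)) ω).length :=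
    List.prefix_iff_eq_take.mp h2
  rw [h3, autT_len, hω', List.take_left]

lemma levelStab_truncEq {n : ℕ} {t : AutT d} (ht : t ∈ levelStab d n) (hd : 1 ≤ d)
    (x y : AutT d) : truncEq d n (t * x) y ↔ truncEq d n x y := by
  constructor <;> intro h ω hω <;> have hx := h ω hω
  · rw [mul_apply, levelStab_fixes ht hd (by rw [autT_len]; exact hω)] at hx
    exact hx
  · rw [mul_apply, levelStab_fixes ht hd (by rw [autT_len]; exact hω)]
    exact hx

end Infra
section Topo

variable {d : ℕ}

instance : DiscreteTopology (V d) := ⟨rfl⟩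

lemma continuous_ev {G : Subgroup (AutT d)} (ω : V d) :
    Continuous fun x : ↥G => ev x ω := by
  have h1 : Continuous fun x : ↥G => (((x : AutT d) : Equiv.Perm (V d)) : V d → V d) :=
    continuous_induced_dom.comp (continuous_subtype_val.comp continuous_subtype_val)
  exact (continuous_apply ω).comp h1

lemma continuous_to_G {X : Type*} [TopologicalSpace X] {G : Subgroup (AutT d)} (f : X → ↥G)
    (h : ∀ ω : V d, Continuous fun x => ev (f x) ω) : Continuous f := by
  rw [continuous_induced_rng]
  rw [continuous_induced_rng]
  rw [continuous_induced_rng]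
  exact continuous_pi h

instance borelG (G : Subgroup (AutT d)) : BorelSpace ↥G := ⟨rfl⟩

instance measMulG (G : Subgroup (AutT d)) : MeasurableMul ↥G where
  measurable_const_mul a := by
    apply Continuous.measurable
    apply continuous_to_G
    intro ω
    have : (fun x : ↥G => ev (a * x) ω)
        = fun x : ↥G => ((a : AutT d) : Equiv.Perm (V d)) (ev x ω) := rfl
    rw [this]
    exact (continuous_of_discreteTopology
      (f := (((a : AutT d) : Equiv.Perm (V d)) : V d → V d))).comp (continuous_ev ω)
  measurable_mul_const a := by
    apply Continuous.measurable
    apply continuous_to_G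
    intro ω
    have : (fun x : ↥G => ev (x * a) ω)
        = fun x : ↥G => ev x (((a : AutT d) : Equiv.Perm (V d)) ω) := rfl
    rw [this]
    exact continuous_ev _

lemma meas_ev_eq {G : Subgroup (AutT d)} (ω c : V d) :
    MeasurableSet {x : ↥G | ev x ω = c} := by
  have : {x : ↥G | ev x ω = c} = (fun x : ↥G => ev x ω) ⁻¹' {c} := rfl
  rw [this]
  exact (IsOpen.preimage (continuous_ev ω) (isOpen_discrete _)).measurableSet

lemma meas_pre {G : Subgroup (AutT d)} (μ : MeasureTheory.Measure ↥G)
    [μ.IsMulLeftInvariant] (t : ↥G) (S : Set ↥G) :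
    μ ((fun x => t * x) ⁻¹' S) = μ S :=
  MeasureTheory.measure_preimage_mul μ t S

end Topo
section Classes

open scoped ENNReal

variable {d : ℕ}

/-- The finite trace of an automorphism at level `L`. -/
def tr (d L : ℕ) (g : AutT d) : {l : V d // l.length ≤ L} → V d :=
  fun ω => (g : Equiv.Perm (V d)) ω.val

lemma tr_eq_iff {L : ℕ} {g h : AutT d} : tr d L g = tr d L h ↔ truncEq d L g h :=
  ⟨fun he ω hω => congrFun he ⟨ω, hω⟩, fun ht => funext fun ω => ht ω.val ω.2⟩

lemma finite_tr_image (L : ℕ) (S : Set (AutT d)) : (tr d L '' S).Finite := by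
  have hT : {l : V d | l.length ≤ L}.Finite := List.finite_length_le (Fin d) L
  haveI : Finite {l : V d // l.length ≤ L} := hT.to_subtype
  have hpi : (Set.pi (Set.univ : Set {l : V d // l.length ≤ L})
      (fun _ => {l : V d | l.length ≤ L})).Finite := Set.Finite.pi (fun _ => hT)
  apply hpi.subset
  rintro f ⟨g, _, rfl⟩
  intro ω _
  show (tr d L g ω).length ≤ L
  have : (tr d L g ω).length = ω.val.length := autT_len g ω.val
  rw [this]
  exact ω.2

/-- cardinality of translated trace image is unchanged -/
lemma ncard_tr_image_mul (m : ℕ) (c : AutT d) (B : Set (AutT d)) :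
    (tr d m '' ((fun b => c * b) '' B)).ncard = (tr d m '' B).ncard := by
  have h1 : tr d m '' ((fun b => c * b) '' B)
      = (fun f : {l : V d // l.length ≤ m} → V d =>
          ((c : Equiv.Perm (V d)) : V d → V d) ∘ f) '' (tr d m '' B) := by
    rw [Set.image_image, Set.image_image]
    apply Set.image_congr
    intro b _
    funext ω
    rfl
  rw [h1]
  apply Set.ncard_image_of_injective
  intro f g hfg
  funext ω
  exact (c : Equiv.Perm (V d)).injective (congrFun hfg ω)

variable {G : Subgroup (AutT d)}

/-- The truncation class of `g` at level `L`, inside `G`. -/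
def clsSet (G : Subgroup (AutT d)) (L : ℕ) (g : AutT d) : Set ↥G :=
  {x | truncEq d L (x : AutT d) g}

lemma meas_clsSet (L : ℕ) (g : AutT d) : MeasurableSet (clsSet G L g) := by
  have : clsSet G L g
      = ⋂ ω : {l : V d // l.length ≤ L},
          {x : ↥G | ev x ω.val = (g : Equiv.Perm (V d)) ω.val} := by
    ext x
    simp only [clsSet, Set.mem_iInter, Set.mem_setOf_eq]
    exact ⟨fun h ω => h ω.val ω.2, fun h ω hω => h ⟨ω, hω⟩⟩
  rw [this]
  exact MeasurableSet.iInter fun ω => meas_ev_eq _ _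

lemma meas_secFun_eq (v ω c : V d) :
    MeasurableSet {x : ↥G | secFun (x : AutT d) v ω = c} := by
  have : {x : ↥G | secFun (x : AutT d) v ω = c}
      = ⋃ c' ∈ {c' : V d | c'.drop v.length = c}, {x : ↥G | ev x (v ++ ω) = c'} := by
    ext x
    simp only [Set.mem_setOf_eq, Set.mem_iUnion, exists_prop]
    constructor
    · intro h
      exact ⟨ev x (v ++ ω), h, rfl⟩
    · rintro ⟨c', h1, h2⟩
      show List.drop v.length (ev x (v ++ ω)) = c
      rw [h2]
      exact h1
  rw [this]
  exact MeasurableSet.biUnion (Set.to_countable _) fun c' _ => meas_ev_eq _ _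

lemma meas_truncSec (m : ℕ) (v : V d) (b : AutT d) :
    MeasurableSet {x : ↥G | truncEq d m (sectionAt (x : AutT d) v) b} := by
  have : {x : ↥G | truncEq d m (sectionAt (x : AutT d) v) b}
      = ⋂ ω : {l : V d // l.length ≤ m},
          {x : ↥G | secFun (x : AutT d) v ω.val = (b : Equiv.Perm (V d)) ω.val} := by
    ext x
    simp only [Set.mem_iInter, Set.mem_setOf_eq]
    exact ⟨fun h ω => h ω.val ω.2, fun h ω hω => h ⟨ω, hω⟩⟩
  rw [this]
  exact MeasurableSet.iInter fun ω => meas_secFun_eq _ _ _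

lemma meas_Fcond (u w : V d) :
    MeasurableSet {x : ↥G | ev x (u ++ w) = ev x u ++ w} := by
  have : {x : ↥G | ev x (u ++ w) = ev x u ++ w}
      = ⋃ c : V d, ({x : ↥G | ev x u = c} ∩ {x : ↥G | ev x (u ++ w) = c ++ w}) := by
    ext x
    simp only [Set.mem_setOf_eq, Set.mem_iUnion, Set.mem_inter_iff]
    constructor
    · intro h
      exact ⟨ev x u, rfl, h⟩
    · rintro ⟨c, h1, h2⟩
      rw [h1, h2]
  rw [this]
  exact MeasurableSet.iUnion fun c => (meas_ev_eq _ _).inter (meas_ev_eq _ _)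

lemma meas_Bcond (m : ℕ) (v : V d) (B : Set (AutT d)) :
    MeasurableSet {x : ↥G | ∃ b ∈ B, truncEq d m (sectionAt (x : AutT d) v) b} := by
  have : {x : ↥G | ∃ b ∈ B, truncEq d m (sectionAt (x : AutT d) v) b}
      = ⋃ f ∈ tr d m '' B, ⋂ ω : {l : V d // l.length ≤ m},
          {x : ↥G | secFun (x : AutT d) v ω.val = f ω} := by
    ext x
    simp only [Set.mem_setOf_eq, Set.mem_iUnion, Set.mem_iInter, exists_prop]
    constructor
    · rintro ⟨b, hb, htr⟩
      exact ⟨tr d m b, ⟨b, hb, rfl⟩, fun ω => htr ω.val ω.2⟩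
    · rintro ⟨f, ⟨b, hb, rfl⟩, hx⟩
      exact ⟨b, hb, fun ω hω => hx ⟨ω, hω⟩⟩
  rw [this]
  exact MeasurableSet.biUnion (finite_tr_image m B).countable
    fun f _ => MeasurableSet.iInter fun ω => meas_secFun_eq _ _ _

end Classes
section Gen

open MeasureTheory
open scoped ENNReal

variable {d : ℕ} {G : Subgroup (AutT d)}

lemma measure_biUnion_const {γ : Type*} (μ : Measure ↥G) (I : Set γ) (hI : I.Finite)
    (F : γ → Set ↥G) (hmeas : ∀ i ∈ I, MeasurableSet (F i))
    (hdisj : ∀ i ∈ I, ∀ j ∈ I, i ≠ j → Disjoint (F i) (F j))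
    (c : ℝ≥0∞) (hc : ∀ i ∈ I, μ (F i) = c) :
    μ (⋃ i ∈ I, F i) = I.ncard * c := by
  classical
  have h1 : (⋃ i ∈ I, F i) = ⋃ i ∈ hI.toFinset, F i := by
    simp [Set.Finite.mem_toFinset]
  rw [h1]
  rw [measure_biUnion_finset ?hd ?hm]
  case hd =>
    intro i hi j hj hij
    exact hdisj i (hI.mem_toFinset.mp hi) j (hI.mem_toFinset.mp hj) hij
  case hm =>
    intro i hi
    exact hmeas i (hI.mem_toFinset.mp hi)
  have h2 : ∀ i ∈ hI.toFinset, μ (F i) = c := fun i hi => hc i (hI.mem_toFinset.mp hi)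
  rw [Finset.sum_congr rfl h2, Finset.sum_const, nsmul_eq_mul,
    Set.ncard_eq_toFinset_card I hI]

lemma measure_biUnion_trace (μ : Measure ↥G) (L : ℕ) (S : Set (AutT d))
    (F : AutT d → Set ↥G)
    (hmeas : ∀ a ∈ S, MeasurableSet (F a))
    (hcong : ∀ a ∈ S, ∀ a' ∈ S, truncEq d L a a' → F a = F a')
    (hdisj : ∀ a ∈ S, ∀ a' ∈ S, ¬ truncEq d L a a' → Disjoint (F a) (F a'))
    (c : ℝ≥0∞) (hc : ∀ a ∈ S, μ (F a) = c) :
    μ (⋃ a ∈ S, F a) = (tr d L '' S).ncard * c := by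
  classical
  have hrep : ∀ f ∈ tr d L '' S, ∃ a, a ∈ S ∧ tr d L a = f := by
    rintro f ⟨a, ha, rfl⟩; exact ⟨a, ha, rfl⟩
  choose! r hrS hrtr using hrep
  have hU : (⋃ a ∈ S, F a) = ⋃ f ∈ tr d L '' S, F (r f) := by
    ext x
    simp only [Set.mem_iUnion, exists_prop]
    constructor
    · rintro ⟨a, ha, hx⟩
      have hmem : tr d L a ∈ tr d L '' S := ⟨a, ha, rfl⟩
      have htr : truncEq d L a (r (tr d L a)) :=
        tr_eq_iff.mp (hrtr _ hmem).symm
      refine ⟨tr d L a, hmem, ?_⟩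
      rw [← hcong a ha (r (tr d L a)) (hrS _ hmem) htr]
      exact hx
    · rintro ⟨f, hf, hx⟩
      exact ⟨r f, hrS f hf, hx⟩
  rw [hU]
  apply measure_biUnion_const μ _ (finite_tr_image L S)
  · intro f hf
    exact hmeas _ (hrS f hf)
  · intro f hf g hg hfg
    apply hdisj _ (hrS f hf) _ (hrS g hg)
    intro htr
    exact hfg (((hrtr f hf).symm.trans (tr_eq_iff.mpr htr)).trans (hrtr g hg))
  · intro f hf
    exact hc _ (hrS f hf)

end Gen
section Meas1

open MeasureTheory
open scoped ENNReal

variable {d : ℕ} {G : Subgroup (AutT d)}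

lemma ev_def (x : ↥G) (ω : V d) :
    ev x ω = ((x : AutT d) : Equiv.Perm (V d)) ω := rfl

lemma truncEq_congr_left {m : ℕ} {g g' b : AutT d}
    (h : ∀ ω : V d, ω.length ≤ m →
      (g : Equiv.Perm (V d)) ω = (g' : Equiv.Perm (V d)) ω) :
    truncEq d m g b ↔ truncEq d m g' b := by
  constructor <;> intro ht ω hω
  · rw [← h ω hω]; exact ht ω hω
  · rw [h ω hω]; exact ht ω hω

lemma clsSet_congr {L : ℕ} {a a' : AutT d} (h : truncEq d L a a') :
    clsSet G L a = clsSet G L a' := by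
  ext x
  exact ⟨fun hx => truncEq_trans hx h, fun hx => truncEq_trans hx (truncEq_symm h)⟩

lemma clsSet_disjoint {L : ℕ} {a a' : AutT d} (h : ¬ truncEq d L a a') :
    Disjoint (clsSet G L a) (clsSet G L a') := by
  rw [Set.disjoint_left]
  intro x hx hx'
  exact h (truncEq_trans (truncEq_symm hx) hx')

lemma mu_clsSet (μ : Measure ↥G) [μ.IsMulLeftInvariant] {L : ℕ} {a : AutT d}
    (ha : a ∈ G) : μ (clsSet G L a) = μ (clsSet G L 1) := by
  have hpre : (fun x : ↥G => (⟨a, ha⟩ : ↥G) * x) ⁻¹' clsSet G L a = clsSet G L 1 := by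
    ext x
    show truncEq d L (a * (x : AutT d)) a ↔ truncEq d L (x : AutT d) 1
    have := truncEq_mul_left_iff (L := L) a (x : AutT d) 1
    rwa [mul_one] at this
  rw [← hpre, meas_pre]

lemma mu_univ_eq (μ : Measure ↥G) [IsProbabilityMeasure μ] [μ.IsMulLeftInvariant]
    (L : ℕ) :
    ((tr d L '' (G : Set (AutT d))).ncard : ℝ≥0∞) * μ (clsSet G L 1) = 1 := by
  have hU : (⋃ a ∈ (G : Set (AutT d)), clsSet G L a) = Set.univ := by
    ext x
    simp only [Set.mem_iUnion, Set.mem_univ, iff_true, exists_prop]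
    exact ⟨(x : AutT d), x.2, truncEq_refl L _⟩
  have := measure_biUnion_trace μ L (G : Set (AutT d)) (clsSet G L)
    (fun a _ => meas_clsSet L a)
    (fun a _ a' _ h => clsSet_congr h)
    (fun a _ a' _ h => clsSet_disjoint h)
    (μ (clsSet G L 1)) (fun a ha => mu_clsSet μ ha)
  rw [hU, measure_univ] at this
  exact this.symm

lemma mu_cone (μ : Measure ↥G) [μ.IsMulLeftInvariant] (L : ℕ) (S : Set (AutT d))
    (hS : S ⊆ (G : Set (AutT d))) :
    μ (Subtype.val ⁻¹' coneSet d G L S)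
      = ((tr d L '' S).ncard : ℝ≥0∞) * μ (clsSet G L 1) := by
  have hU : Subtype.val ⁻¹' coneSet d G L S = ⋃ a ∈ S, clsSet G L a := by
    ext x
    simp only [Set.mem_preimage, coneSet, Set.mem_setOf_eq, Set.mem_iUnion, exists_prop]
    constructor
    · rintro ⟨_, a, ha, htr⟩
      exact ⟨a, ha, htr⟩
    · rintro ⟨a, ha, htr⟩
      exact ⟨x.2, a, ha, htr⟩
  rw [hU]
  exact measure_biUnion_trace μ L S (clsSet G L)
    (fun a _ => meas_clsSet L a)
    (fun a _ a' _ h => clsSet_congr h)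
    (fun a _ a' _ h => clsSet_disjoint h)
    (μ (clsSet G L 1)) (fun a ha => mu_clsSet μ (hS ha))

end Meas1
section Meas2

open MeasureTheory
open scoped ENNReal

variable {d : ℕ} {G : Subgroup (AutT d)}

lemma mu_stab (μ : Measure ↥G) [IsProbabilityMeasure μ] [μ.IsMulLeftInvariant]
    (hlt : LevelTrans d G) (w : V d) :
    (({l : V d | l.length = w.length}).ncard : ℝ≥0∞) * μ {x : ↥G | ev x w = w} = 1 := by
  have hU : (⋃ w' ∈ {l : V d | l.length = w.length}, {x : ↥G | ev x w = w'})
      = Set.univ := by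
    ext x
    simp only [Set.mem_iUnion, Set.mem_univ, iff_true, exists_prop, Set.mem_setOf_eq]
    exact ⟨ev x w, autT_len (x : AutT d) w, rfl⟩
  have := measure_biUnion_const μ {l : V d | l.length = w.length}
    (List.finite_length_eq (Fin d) w.length)
    (fun w' => {x : ↥G | ev x w = w'})
    (fun w' _ => meas_ev_eq w w')
    (fun w₁ _ w₂ _ hne => by
      rw [Set.disjoint_left]
      intro x hx1 hx2
      exact hne ((hx1 : ev x w = w₁).symm.trans hx2))
    (μ {x : ↥G | ev x w = w})
    ?_
  · rw [hU, measure_univ] at this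
    exact this.symm
  · intro w' hw'
    obtain ⟨t, htG, htw⟩ := hlt w w' hw'.symm
    have hpre : (fun x : ↥G => (⟨t, htG⟩ : ↥G) * x) ⁻¹' {x : ↥G | ev x w = w'}
        = {x : ↥G | ev x w = w} := by
      ext x
      simp only [Set.mem_preimage, Set.mem_setOf_eq]
      have h1 : ev ((⟨t, htG⟩ : ↥G) * x) w = (t : Equiv.Perm (V d)) (ev x w) := rfl
      rw [h1, Equiv.apply_eq_iff_eq_symm_apply]
      have h2 : (t : Equiv.Perm (V d)).symm w' = w := by
        rw [Equiv.symm_apply_eq]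
        exact htw.symm
      rw [h2]
    rw [← hpre, meas_pre]

lemma mu_fib (μ : Measure ↥G) [μ.IsMulLeftInvariant] (hd1 : 1 ≤ d)
    (hstab : StabLevelTrans d G) {n : ℕ} (hn : 1 ≤ n) {u : V d} (hu : u.length = n)
    (w w' : V d) (hw' : w'.length = w.length) :
    μ (clsSet G n 1 ∩ {x : ↥G | ev x (u ++ w) = u ++ w'})
      = μ (clsSet G n 1 ∩ {x : ↥G | ev x (u ++ w) = u ++ w}) := by
  obtain ⟨t, htmem, htw⟩ := hstab n hn u w w' hu hw'.symm
  obtain ⟨htG, htst⟩ := Subgroup.mem_inf.mp htmem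
  have hpre : (fun x : ↥G => (⟨t, htG⟩ : ↥G) * x) ⁻¹'
        (clsSet G n 1 ∩ {x : ↥G | ev x (u ++ w) = u ++ w'})
      = clsSet G n 1 ∩ {x : ↥G | ev x (u ++ w) = u ++ w} := by
    ext x
    simp only [Set.mem_preimage, Set.mem_inter_iff, Set.mem_setOf_eq, clsSet]
    have e1 : (((⟨t, htG⟩ : ↥G) * x : ↥G) : AutT d) = t * (x : AutT d) := rfl
    rw [e1]
    rw [levelStab_truncEq htst hd1]
    have h1 : ev ((⟨t, htG⟩ : ↥G) * x) (u ++ w) = (t : Equiv.Perm (V d)) (ev x (u ++ w)) := rfl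
    rw [h1, Equiv.apply_eq_iff_eq_symm_apply]
    have h2 : (t : Equiv.Perm (V d)).symm (u ++ w') = u ++ w := by
      rw [Equiv.symm_apply_eq]
      exact htw.symm
    rw [h2]
  rw [← hpre, meas_pre]

lemma cls_partition_fib (μ : Measure ↥G) [μ.IsMulLeftInvariant] (hd1 : 1 ≤ d)
    (hstab : StabLevelTrans d G) {n : ℕ} (hn : 1 ≤ n) {u : V d} (hu : u.length = n)
    (w : V d) :
    μ (clsSet G n 1)
      = (({l : V d | l.length = w.length}).ncard : ℝ≥0∞) *
        μ (clsSet G n 1 ∩ {x : ↥G | ev x (u ++ w) = u ++ w}) := by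
  have hU : clsSet G n 1
      = ⋃ w' ∈ {l : V d | l.length = w.length},
          (clsSet G n 1 ∩ {x : ↥G | ev x (u ++ w) = u ++ w'}) := by
    ext x
    simp only [Set.mem_iUnion, Set.mem_inter_iff, Set.mem_setOf_eq, exists_prop]
    constructor
    · intro hx
      have hxu : ((x : AutT d) : Equiv.Perm (V d)) u = u := hx u (by rw [hu])
      have hev : ev x (u ++ w) = u ++ secFun (x : AutT d) u w := by
        rw [ev_def, sec_spec (x : AutT d) u w, hxu]
      exact ⟨secFun (x : AutT d) u w, secFun_length _ _ _, hx, hev⟩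
    · rintro ⟨w', _, hx, _⟩
      exact hx
  conv_lhs => rw [hU]
  exact measure_biUnion_const μ _ (List.finite_length_eq (Fin d) w.length) _
    (fun w' _ => (meas_clsSet n 1).inter (meas_ev_eq _ _))
    (fun w₁ _ w₂ _ hne => by
      rw [Set.disjoint_left]
      rintro x ⟨_, hx1⟩ ⟨_, hx2⟩
      exact hne (List.append_cancel_left (hx1.symm.trans hx2)))
    _ (fun w' hw' => mu_fib μ hd1 hstab hn hu w w' hw')

end Meas2
section Meas3

open MeasureTheory
open scoped ENNReal

variable {d : ℕ} {G : Subgroup (AutT d)}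

lemma mu_Z (μ : Measure ↥G) [μ.IsMulLeftInvariant] (hd1 : 1 ≤ d) {n m : ℕ} {v : V d}
    (hsme : SectModEq d G n m v) {b : AutT d} (hb : b ∈ G) :
    μ (clsSet G n 1 ∩ {x : ↥G | ev x v = v}
        ∩ {x : ↥G | truncEq d m (sectionAt (x : AutT d) v) b})
      = μ (clsSet G n 1 ∩ {x : ↥G | ev x v = v}
        ∩ {x : ↥G | truncEq d m (sectionAt (x : AutT d) v) 1}) := by
  obtain ⟨g, hgG, hgst, hgv, hgtr⟩ := (hsme b).mpr ⟨b, hb, truncEq_refl m b⟩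
  have hpre : (fun x : ↥G => (⟨g, hgG⟩ : ↥G) * x) ⁻¹'
        (clsSet G n 1 ∩ {x : ↥G | ev x v = v}
          ∩ {x : ↥G | truncEq d m (sectionAt (x : AutT d) v) b})
      = clsSet G n 1 ∩ {x : ↥G | ev x v = v}
          ∩ {x : ↥G | truncEq d m (sectionAt (x : AutT d) v) 1} := by
    ext x
    simp only [Set.mem_preimage, Set.mem_inter_iff, Set.mem_setOf_eq, clsSet]
    have e1 : (((⟨g, hgG⟩ : ↥G) * x : ↥G) : AutT d) = g * (x : AutT d) := rfl
    rw [e1, levelStab_truncEq hgst hd1]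
    have c2 : ev ((⟨g, hgG⟩ : ↥G) * x) v = v ↔ ev x v = v := by
      have h1 : ev ((⟨g, hgG⟩ : ↥G) * x) v = (g : Equiv.Perm (V d)) (ev x v) := rfl
      have h2 : ((g : Equiv.Perm (V d))).symm v = v := by
        rw [Equiv.symm_apply_eq]
        exact hgv.symm
      rw [h1, Equiv.apply_eq_iff_eq_symm_apply, h2]
    have c3 : ∀ hxv : ev x v = v,
        (truncEq d m (sectionAt (g * (x : AutT d)) v) b
          ↔ truncEq d m (sectionAt (x : AutT d) v) 1) := by
      intro hxv
      have hpt : ∀ ω : V d, ω.length ≤ m →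
          ((sectionAt (g * (x : AutT d)) v : AutT d) : Equiv.Perm (V d)) ω
            = ((b * sectionAt (x : AutT d) v : AutT d) : Equiv.Perm (V d)) ω := by
        intro ω hω
        rw [sectionAt_apply, secFun_mul, mul_apply, sectionAt_apply]
        have hxv' : ((x : AutT d) : Equiv.Perm (V d)) v = v := hxv
        rw [hxv']
        exact hgtr (secFun (x : AutT d) v ω) (by rw [secFun_length]; exact hω)
      rw [truncEq_congr_left hpt, truncEq_mul_inv_iff, inv_mul_cancel]
    constructor
    · rintro ⟨⟨h1, h2⟩, h3⟩
      exact ⟨⟨h1, c2.mp h2⟩, (c3 (c2.mp h2)).mp h3⟩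
    · rintro ⟨⟨h1, h2⟩, h3⟩
      exact ⟨⟨h1, c2.mpr h2⟩, (c3 h2).mpr h3⟩
  rw [← hpre, meas_pre]

lemma Z_partition (μ : Measure ↥G) [μ.IsMulLeftInvariant] (hd1 : 1 ≤ d)
    (hss : SelfSimilar d G) {n m : ℕ} {v : V d} (hsme : SectModEq d G n m v) :
    μ (clsSet G n 1 ∩ {x : ↥G | ev x v = v})
      = ((tr d m '' (G : Set (AutT d))).ncard : ℝ≥0∞) *
        μ (clsSet G n 1 ∩ {x : ↥G | ev x v = v}
          ∩ {x : ↥G | truncEq d m (sectionAt (x : AutT d) v) 1}) := by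
  have hU : clsSet G n 1 ∩ {x : ↥G | ev x v = v}
      = ⋃ b ∈ (G : Set (AutT d)),
          (clsSet G n 1 ∩ {x : ↥G | ev x v = v}
            ∩ {x : ↥G | truncEq d m (sectionAt (x : AutT d) v) b}) := by
    ext x
    simp only [Set.mem_iUnion, Set.mem_inter_iff, Set.mem_setOf_eq, exists_prop]
    constructor
    · rintro ⟨h1, h2⟩
      exact ⟨sectionAt (x : AutT d) v, hss (x : AutT d) x.2 v,
        ⟨h1, h2⟩, truncEq_refl m _⟩
    · rintro ⟨b, _, ⟨h1, h2⟩, _⟩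
      exact ⟨h1, h2⟩
  conv_lhs => rw [hU]
  exact measure_biUnion_trace μ m (G : Set (AutT d)) _
    (fun b _ => ((meas_clsSet n 1).inter (meas_ev_eq _ _)).inter (meas_truncSec m v b))
    (fun b _ b' _ h => by
      ext x
      simp only [Set.mem_inter_iff, Set.mem_setOf_eq]
      exact ⟨fun ⟨h12, h3⟩ => ⟨h12, truncEq_trans h3 h⟩,
        fun ⟨h12, h3⟩ => ⟨h12, truncEq_trans h3 (truncEq_symm h)⟩⟩)
    (fun b _ b' _ h => by
      rw [Set.disjoint_left]
      rintro x ⟨_, h3⟩ ⟨_, h3'⟩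
      exact h (truncEq_trans (truncEq_symm h3) h3'))
    _ (fun b hb => mu_Z μ hd1 hsme hb)

end Meas3
section Meas4

open MeasureTheory
open scoped ENNReal

variable {d : ℕ} {G : Subgroup (AutT d)}

lemma perm_inv_apply (s : AutT d) (ω : V d) :
    ((s⁻¹ : AutT d) : Equiv.Perm (V d)) ω = ((s : Equiv.Perm (V d))).symm ω := rfl

lemma append_left_cancel_iff (u r r' : V d) : u ++ r = u ++ r' ↔ r = r' :=
  ⟨fun h => List.append_cancel_left h, fun h => by rw [h]⟩

/-- Step A translation: shifting a piece by its level-`n` representative. -/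
lemma mu_stepA (μ : Measure ↥G) [μ.IsMulLeftInvariant] {n m : ℕ} {u w : V d}
    (hu : u.length = n) (B : Set (AutT d)) {a : AutT d} (ha : a ∈ G) :
    μ (clsSet G n a ∩ ({x : ↥G | ev x (u ++ w) = ev x u ++ w}
        ∩ {x : ↥G | ∃ b ∈ B, truncEq d m (sectionAt (x : AutT d) (u ++ w)) b}))
      = μ (clsSet G n 1
          ∩ {x : ↥G | ev x (u ++ w)
              = u ++ (((sectionAt a u)⁻¹ : AutT d) : Equiv.Perm (V d)) w}
          ∩ {x : ↥G | ∃ b ∈ B, truncEq d m (sectionAt (x : AutT d) (u ++ w))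
              ((sectionAt a (u ++ (((sectionAt a u)⁻¹ : AutT d) : Equiv.Perm (V d)) w))⁻¹
                * b)}) := by
  set ra : V d := (((sectionAt a u)⁻¹ : AutT d) : Equiv.Perm (V d)) w with hra
  set h₁ : AutT d := sectionAt a (u ++ ra) with hh₁
  have hpre : (fun x : ↥G => (⟨a, ha⟩ : ↥G) * x) ⁻¹'
        (clsSet G n a ∩ ({x : ↥G | ev x (u ++ w) = ev x u ++ w}
          ∩ {x : ↥G | ∃ b ∈ B, truncEq d m (sectionAt (x : AutT d) (u ++ w)) b}))
      = clsSet G n 1 ∩ {x : ↥G | ev x (u ++ w) = u ++ ra}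
          ∩ {x : ↥G | ∃ b ∈ B, truncEq d m (sectionAt (x : AutT d) (u ++ w)) (h₁⁻¹ * b)} := by
    ext x
    simp only [Set.mem_preimage, Set.mem_inter_iff, Set.mem_setOf_eq, clsSet]
    have e1 : (((⟨a, ha⟩ : ↥G) * x : ↥G) : AutT d) = a * (x : AutT d) := rfl
    rw [e1]
    have c1 : truncEq d n (a * (x : AutT d)) a ↔ truncEq d n (x : AutT d) 1 := by
      have := truncEq_mul_left_iff (L := n) a (x : AutT d) 1
      rwa [mul_one] at this
    rw [c1]
    -- now split on the first component
    constructor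
    · rintro ⟨hx1, h2, h3⟩
      refine ⟨⟨hx1, ?_⟩, ?_⟩
      all_goals {
        have hxu : ((x : AutT d) : Equiv.Perm (V d)) u = u := hx1 u (le_of_eq hu)
        have hxsplit : ((x : AutT d) : Equiv.Perm (V d)) (u ++ w)
            = u ++ secFun (x : AutT d) u w := by
          rw [sec_spec (x : AutT d) u w, hxu]
        set r : V d := secFun (x : AutT d) u w with hrdef
        have hLHS : (ev ((⟨a, ha⟩ : ↥G) * x) (u ++ w) = ev ((⟨a, ha⟩ : ↥G) * x) u ++ w)
            ↔ r = ra := by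
          have eA : ev ((⟨a, ha⟩ : ↥G) * x) (u ++ w)
              = (a : Equiv.Perm (V d)) (u ++ r) := by
            show (a : Equiv.Perm (V d)) (((x : AutT d) : Equiv.Perm (V d)) (u ++ w)) = _
            rw [hxsplit]
          have eB : ev ((⟨a, ha⟩ : ↥G) * x) u = (a : Equiv.Perm (V d)) u := by
            show (a : Equiv.Perm (V d)) (((x : AutT d) : Equiv.Perm (V d)) u) = _
            rw [hxu]
          rw [eA, eB, sec_spec a u r, append_left_cancel_iff]
          rw [show secFun a u r = ((sectionAt a u : AutT d) : Equiv.Perm (V d)) r from rfl]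
          rw [Equiv.apply_eq_iff_eq_symm_apply]
          rw [hra, perm_inv_apply]
        have hRHS : (ev x (u ++ w) = u ++ ra) ↔ r = ra := by
          rw [ev_def, hxsplit, append_left_cancel_iff]
        have hsec : ∀ (hr : r = ra) (b : AutT d),
            truncEq d m (sectionAt (a * (x : AutT d)) (u ++ w)) b
              ↔ truncEq d m (sectionAt (x : AutT d) (u ++ w)) (h₁⁻¹ * b) := by
          intro hr b
          have hpt : ∀ ω : V d, ω.length ≤ m →
              ((sectionAt (a * (x : AutT d)) (u ++ w) : AutT d) : Equiv.Perm (V d)) ω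
                = ((h₁ * sectionAt (x : AutT d) (u ++ w) : AutT d) : Equiv.Perm (V d)) ω := by
            intro ω hω
            rw [sectionAt_apply, secFun_mul, mul_apply, sectionAt_apply]
            have : ((x : AutT d) : Equiv.Perm (V d)) (u ++ w) = u ++ ra := by
              rw [hxsplit, hr]
            rw [this]
            rfl
          rw [truncEq_congr_left hpt, truncEq_mul_inv_iff]
        first
        | exact hRHS.mpr (hLHS.mp h2)
        | { obtain ⟨b, hb, htr⟩ := h3
            exact ⟨b, hb, (hsec (hLHS.mp h2) b).mp htr⟩ }
      }
    · rintro ⟨⟨hx1, h2⟩, h3⟩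
      refine ⟨hx1, ?_, ?_⟩
      all_goals {
        have hxu : ((x : AutT d) : Equiv.Perm (V d)) u = u := hx1 u (le_of_eq hu)
        have hxsplit : ((x : AutT d) : Equiv.Perm (V d)) (u ++ w)
            = u ++ secFun (x : AutT d) u w := by
          rw [sec_spec (x : AutT d) u w, hxu]
        set r : V d := secFun (x : AutT d) u w with hrdef
        have hLHS : (ev ((⟨a, ha⟩ : ↥G) * x) (u ++ w) = ev ((⟨a, ha⟩ : ↥G) * x) u ++ w)
            ↔ r = ra := by
          have eA : ev ((⟨a, ha⟩ : ↥G) * x) (u ++ w)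
              = (a : Equiv.Perm (V d)) (u ++ r) := by
            show (a : Equiv.Perm (V d)) (((x : AutT d) : Equiv.Perm (V d)) (u ++ w)) = _
            rw [hxsplit]
          have eB : ev ((⟨a, ha⟩ : ↥G) * x) u = (a : Equiv.Perm (V d)) u := by
            show (a : Equiv.Perm (V d)) (((x : AutT d) : Equiv.Perm (V d)) u) = _
            rw [hxu]
          rw [eA, eB, sec_spec a u r, append_left_cancel_iff]
          rw [show secFun a u r = ((sectionAt a u : AutT d) : Equiv.Perm (V d)) r from rfl]
          rw [Equiv.apply_eq_iff_eq_symm_apply]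
          rw [hra, perm_inv_apply]
        have hRHS : (ev x (u ++ w) = u ++ ra) ↔ r = ra := by
          rw [ev_def, hxsplit, append_left_cancel_iff]
        have hsec : ∀ (hr : r = ra) (b : AutT d),
            truncEq d m (sectionAt (a * (x : AutT d)) (u ++ w)) b
              ↔ truncEq d m (sectionAt (x : AutT d) (u ++ w)) (h₁⁻¹ * b) := by
          intro hr b
          have hpt : ∀ ω : V d, ω.length ≤ m →
              ((sectionAt (a * (x : AutT d)) (u ++ w) : AutT d) : Equiv.Perm (V d)) ω
                = ((h₁ * sectionAt (x : AutT d) (u ++ w) : AutT d) : Equiv.Perm (V d)) ω := by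
            intro ω hω
            rw [sectionAt_apply, secFun_mul, mul_apply, sectionAt_apply]
            have : ((x : AutT d) : Equiv.Perm (V d)) (u ++ w) = u ++ ra := by
              rw [hxsplit, hr]
            rw [this]
            rfl
          rw [truncEq_congr_left hpt, truncEq_mul_inv_iff]
        first
        | exact hLHS.mpr (hRHS.mp h2)
        | { obtain ⟨b, hb, htr⟩ := h3
            exact ⟨b, hb, (hsec (hRHS.mp h2) b).mpr htr⟩ }
      }
  rw [← hpre, meas_pre]

end Meas4
section Meas5

open MeasureTheory
open scoped ENNReal

variable {d : ℕ} {G : Subgroup (AutT d)}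

lemma mu_stepB (μ : Measure ↥G) [μ.IsMulLeftInvariant] (hd1 : 1 ≤ d)
    (hstab : StabLevelTrans d G) {n m : ℕ} (hn : 1 ≤ n)
    {u w : V d} (hu : u.length = n) (ra : V d) (hra : w.length = ra.length)
    (C : Set (AutT d)) :
    ∃ h₂, h₂ ∈ G ∧
      μ (clsSet G n 1 ∩ {x : ↥G | ev x (u ++ w) = u ++ ra}
          ∩ {x : ↥G | ∃ b ∈ C, truncEq d m (sectionAt (x : AutT d) (u ++ w)) b})
        = μ (clsSet G n 1 ∩ {x : ↥G | ev x (u ++ w) = u ++ w}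
          ∩ {x : ↥G | ∃ b ∈ C, truncEq d m (sectionAt (x : AutT d) (u ++ w))
              ((sectionAt h₂ (u ++ w))⁻¹ * b)}) := by
  obtain ⟨t, htmem, htw⟩ := hstab n hn u w ra hu hra
  obtain ⟨htG, htst⟩ := Subgroup.mem_inf.mp htmem
  refine ⟨t, htG, ?_⟩
  have hpre : (fun x : ↥G => (⟨t, htG⟩ : ↥G) * x) ⁻¹'
        (clsSet G n 1 ∩ {x : ↥G | ev x (u ++ w) = u ++ ra}
          ∩ {x : ↥G | ∃ b ∈ C, truncEq d m (sectionAt (x : AutT d) (u ++ w)) b})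
      = clsSet G n 1 ∩ {x : ↥G | ev x (u ++ w) = u ++ w}
          ∩ {x : ↥G | ∃ b ∈ C, truncEq d m (sectionAt (x : AutT d) (u ++ w))
              ((sectionAt t (u ++ w))⁻¹ * b)} := by
    ext x
    simp only [Set.mem_preimage, Set.mem_inter_iff, Set.mem_setOf_eq, clsSet]
    have e1 : (((⟨t, htG⟩ : ↥G) * x : ↥G) : AutT d) = t * (x : AutT d) := rfl
    rw [e1, levelStab_truncEq htst hd1]
    have c2 : ev ((⟨t, htG⟩ : ↥G) * x) (u ++ w) = u ++ ra
        ↔ ev x (u ++ w) = u ++ w := by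
      have h1 : ev ((⟨t, htG⟩ : ↥G) * x) (u ++ w)
          = (t : Equiv.Perm (V d)) (ev x (u ++ w)) := rfl
      have h2 : (t : Equiv.Perm (V d)).symm (u ++ ra) = u ++ w := by
        rw [Equiv.symm_apply_eq]
        exact htw.symm
      rw [h1, Equiv.apply_eq_iff_eq_symm_apply, h2]
    have c3 : ∀ (hxv : ev x (u ++ w) = u ++ w) (b : AutT d),
        truncEq d m (sectionAt (t * (x : AutT d)) (u ++ w)) b
          ↔ truncEq d m (sectionAt (x : AutT d) (u ++ w))
              ((sectionAt t (u ++ w))⁻¹ * b) := by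
      intro hxv b
      have hpt : ∀ ω : V d, ω.length ≤ m →
          ((sectionAt (t * (x : AutT d)) (u ++ w) : AutT d) : Equiv.Perm (V d)) ω
            = ((sectionAt t (u ++ w) * sectionAt (x : AutT d) (u ++ w) : AutT d) :
                Equiv.Perm (V d)) ω := by
        intro ω hω
        rw [sectionAt_apply, secFun_mul, mul_apply, sectionAt_apply]
        have hxv' : ((x : AutT d) : Equiv.Perm (V d)) (u ++ w) = u ++ w := hxv
        rw [hxv']
        rfl
      rw [truncEq_congr_left hpt, truncEq_mul_inv_iff]
    constructor
    · rintro ⟨⟨h1, h2⟩, h3⟩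
      obtain ⟨b, hb, htr⟩ := h3
      exact ⟨⟨h1, c2.mp h2⟩, b, hb, (c3 (c2.mp h2) b).mp htr⟩
    · rintro ⟨⟨h1, h2⟩, h3⟩
      obtain ⟨b, hb, htr⟩ := h3
      exact ⟨⟨h1, c2.mpr h2⟩, b, hb, (c3 h2 b).mpr htr⟩
  rw [← hpre, meas_pre]

lemma exists_shift_set (m : ℕ) (vv : V d) (S : Set (AutT d)) (hh : AutT d) :
    {x : ↥G | ∃ b ∈ S, truncEq d m (sectionAt (x : AutT d) vv) (hh⁻¹ * b)}
      = {x : ↥G | ∃ c ∈ (fun b => hh⁻¹ * b) '' S,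
          truncEq d m (sectionAt (x : AutT d) vv) c} := by
  ext x
  simp only [Set.mem_setOf_eq, Set.mem_image]
  constructor
  · rintro ⟨b, hb, htr⟩
    exact ⟨hh⁻¹ * b, ⟨b, hb, rfl⟩, htr⟩
  · rintro ⟨c, ⟨b, hb, rfl⟩, htr⟩
    exact ⟨b, hb, htr⟩

lemma mu_piece (μ : Measure ↥G) [μ.IsMulLeftInvariant] (hd1 : 1 ≤ d)
    (hss : SelfSimilar d G) (hstab : StabLevelTrans d G) {n m : ℕ} (hn : 1 ≤ n)
    {u w : V d} (hu : u.length = n) (hsme : SectModEq d G n m (u ++ w))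
    (B : Set (AutT d)) (hB : B ⊆ (G : Set (AutT d))) {a : AutT d} (ha : a ∈ G) :
    μ (clsSet G n a ∩ ({x : ↥G | ev x (u ++ w) = ev x u ++ w}
        ∩ {x : ↥G | ∃ b ∈ B, truncEq d m (sectionAt (x : AutT d) (u ++ w)) b}))
      = ((tr d m '' B).ncard : ℝ≥0∞) *
        μ (clsSet G n 1 ∩ {x : ↥G | ev x (u ++ w) = u ++ w}
          ∩ {x : ↥G | truncEq d m (sectionAt (x : AutT d) (u ++ w)) 1}) := by
  rw [mu_stepA μ hu B ha]
  set ra : V d := (((sectionAt a u)⁻¹ : AutT d) : Equiv.Perm (V d)) w with hra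
  set h₁ : AutT d := sectionAt a (u ++ ra) with hh₁def
  have hh₁G : h₁ ∈ G := hss a ha (u ++ ra)
  have hralen : w.length = ra.length := (autT_len ((sectionAt a u)⁻¹) w).symm
  rw [exists_shift_set m (u ++ w) B h₁]
  set C₁ : Set (AutT d) := (fun b => h₁⁻¹ * b) '' B with hC₁
  obtain ⟨h₂, hh₂G, heq⟩ := mu_stepB μ hd1 hstab hn hu ra hralen C₁
  rw [heq, exists_shift_set m (u ++ w) C₁ (sectionAt h₂ (u ++ w))]
  set h₂' : AutT d := sectionAt h₂ (u ++ w) with hh₂'def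
  have hh₂'G : h₂' ∈ G := hss h₂ hh₂G (u ++ w)
  set C₂ : Set (AutT d) := (fun c => h₂'⁻¹ * c) '' C₁ with hC₂
  have hC₂G : C₂ ⊆ (G : Set (AutT d)) := by
    rintro c ⟨c₁, ⟨b, hb, rfl⟩, rfl⟩
    exact G.mul_mem (G.inv_mem hh₂'G) (G.mul_mem (G.inv_mem hh₁G) (hB hb))
  have hU : clsSet G n 1 ∩ {x : ↥G | ev x (u ++ w) = u ++ w}
        ∩ {x : ↥G | ∃ c ∈ C₂, truncEq d m (sectionAt (x : AutT d) (u ++ w)) c}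
      = ⋃ c ∈ C₂, (clsSet G n 1 ∩ {x : ↥G | ev x (u ++ w) = u ++ w}
          ∩ {x : ↥G | truncEq d m (sectionAt (x : AutT d) (u ++ w)) c}) := by
    ext x
    simp only [Set.mem_iUnion, Set.mem_inter_iff, Set.mem_setOf_eq, exists_prop]
    constructor
    · rintro ⟨h12, c, hc, htr⟩
      exact ⟨c, hc, h12, htr⟩
    · rintro ⟨c, hc, h12, htr⟩
      exact ⟨h12, c, hc, htr⟩
  rw [hU]
  have hmain := measure_biUnion_trace μ m C₂
    (fun c => clsSet G n 1 ∩ {x : ↥G | ev x (u ++ w) = u ++ w}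
      ∩ {x : ↥G | truncEq d m (sectionAt (x : AutT d) (u ++ w)) c})
    (fun c _ => ((meas_clsSet n 1).inter (meas_ev_eq _ _)).inter (meas_truncSec m _ c))
    (fun c _ c' _ h => by
      ext x
      simp only [Set.mem_inter_iff, Set.mem_setOf_eq]
      exact ⟨fun ⟨h12, h3⟩ => ⟨h12, truncEq_trans h3 h⟩,
        fun ⟨h12, h3⟩ => ⟨h12, truncEq_trans h3 (truncEq_symm h)⟩⟩)
    (fun c _ c' _ h => by
      rw [Set.disjoint_left]
      rintro x ⟨_, h3⟩ ⟨_, h3'⟩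
      exact h (truncEq_trans (truncEq_symm h3) h3'))
    (μ (clsSet G n 1 ∩ {x : ↥G | ev x (u ++ w) = u ++ w}
      ∩ {x : ↥G | truncEq d m (sectionAt (x : AutT d) (u ++ w)) 1}))
    (fun c hc => mu_Z μ hd1 hsme (hC₂G hc))
  rw [hmain]
  congr 1
  have hC₂B : C₂ = (fun b => (h₂'⁻¹ * h₁⁻¹) * b) '' B := by
    rw [hC₂, hC₁, Set.image_image]
    apply Set.image_congr
    intro b _
    rw [mul_assoc]
  rw [hC₂B, ncard_tr_image_mul]

end Meas5
section Main

open MeasureTheory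
open scoped ENNReal

variable {d : ℕ} {G : Subgroup (AutT d)}

lemma Fcond_iff (u w : V d) (x : ↥G) :
    (ev x (u ++ w) = ev x u ++ w) ↔ secFun (x : AutT d) u w = w := by
  rw [ev_def, ev_def, sec_spec (x : AutT d) u w, append_left_cancel_iff]

lemma preim_G_univ : (Subtype.val ⁻¹' (G : Set (AutT d)) : Set ↥G) = Set.univ := by
  ext x
  simp [x.2]

lemma preim_vertexStab (w : V d) :
    (Subtype.val ⁻¹' vertexStabSet d G w : Set ↥G) = {x : ↥G | ev x w = w} := by
  ext x
  simp only [Set.mem_preimage, vertexStabSet, Set.mem_setOf_eq]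
  exact ⟨fun h => h.2, fun h => ⟨x.2, h⟩⟩

lemma preim_E_eq (hss : SelfSimilar d G) (n m : ℕ) (u w : V d)
    (A B : Set (AutT d)) :
    (Subtype.val ⁻¹' (coneSet d G n A ∩ secPre d (u ++ w) (coneSet d G m B) ∩
        secPre d u (vertexStabSet d G w)) : Set ↥G)
      = ⋃ a ∈ A, (clsSet G n a ∩ ({x : ↥G | ev x (u ++ w) = ev x u ++ w}
          ∩ {x : ↥G | ∃ b ∈ B, truncEq d m (sectionAt (x : AutT d) (u ++ w)) b})) := by
  ext x
  simp only [Set.mem_preimage, Set.mem_inter_iff, Set.mem_iUnion, coneSet, secPre,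
    vertexStabSet, Set.mem_setOf_eq, exists_prop, clsSet]
  constructor
  · rintro ⟨⟨⟨_, a, haA, htr⟩, _, hB⟩, _, hfix⟩
    exact ⟨a, haA, htr, (Fcond_iff u w x).mpr hfix, hB⟩
  · rintro ⟨a, haA, htr, hF, hB⟩
    exact ⟨⟨⟨x.2, a, haA, htr⟩, hss (x : AutT d) x.2 (u ++ w), hB⟩,
      hss (x : AutT d) x.2 u, (Fcond_iff u w x).mp hF⟩

lemma preim_ED_eq (hss : SelfSimilar d G) (n m : ℕ) (u w : V d) :
    (Subtype.val ⁻¹' secPre d u (vertexStabSet d G w) : Set ↥G)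
      = ⋃ a ∈ (G : Set (AutT d)),
          (clsSet G n a ∩ ({x : ↥G | ev x (u ++ w) = ev x u ++ w}
            ∩ {x : ↥G | ∃ b ∈ (G : Set (AutT d)),
                truncEq d m (sectionAt (x : AutT d) (u ++ w)) b})) := by
  ext x
  simp only [Set.mem_preimage, Set.mem_iUnion, secPre, vertexStabSet, Set.mem_setOf_eq,
    Set.mem_inter_iff, exists_prop, clsSet, SetLike.mem_coe]
  constructor
  · rintro ⟨_, hfix⟩
    exact ⟨(x : AutT d), x.2, truncEq_refl n _, (Fcond_iff u w x).mpr hfix,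
      sectionAt (x : AutT d) (u ++ w), hss (x : AutT d) x.2 (u ++ w), truncEq_refl m _⟩
  · rintro ⟨a, _, _, hF, _⟩
    exact ⟨hss (x : AutT d) x.2 u, (Fcond_iff u w x).mp hF⟩

end Main

open scoped ENNReal in

/-- **Pseudomixing property.** Let `G ≤ Aut(T)` be a mixing closed group
with delay constant `N = N(m)`.  Then for all `n, m ≥ 1`, every vertex `v = uw` with
`|u| = n` and `|v| ≥ n + N`, and all `A ⊆ π_n(G)`, `B ⊆ π_m(G)`:
`μ_G(C_A ∩ 𝒯_v⁻¹(C_B) ∩ 𝒯_u⁻¹(st_G(w))) = μ_G(C_A)·μ_G(C_B)·μ_G(st_G(w))`, and in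
particular `μ_G(C_A ∩ 𝒯_v⁻¹(C_B) | 𝒯_u⁻¹(st_G(w))) = μ_G(C_A)·μ_G(C_B)`. -/
theorem pseudomixing
    (d : ℕ) (hd : 2 ≤ d) (G : Subgroup (AutT d))
    (hclosed : IsClosed (G : Set (AutT d)))
    (N : ℕ) (hmix : MixingWithDelay d G N)
    (μ : Measure ↥G) [IsProbabilityMeasure μ] [μ.IsMulLeftInvariant]
    (n m : ℕ) (hn : 1 ≤ n) (hm : 1 ≤ m)
    (u w v : V d) (hu : u.length = n) (hv : v = u ++ w) (hlen : n + N ≤ v.length)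
    (A B : Set (AutT d)) (hA : A ⊆ (G : Set (AutT d))) (hB : B ⊆ (G : Set (AutT d))) :
    μ (Subtype.val ⁻¹' (coneSet d G n A ∩ secPre d v (coneSet d G m B) ∩
          secPre d u (vertexStabSet d G w)))
      = μ (Subtype.val ⁻¹' coneSet d G n A) * μ (Subtype.val ⁻¹' coneSet d G m B) *
          μ (Subtype.val ⁻¹' vertexStabSet d G w)
    ∧
    μ (Subtype.val ⁻¹' (coneSet d G n A ∩ secPre d v (coneSet d G m B) ∩
          secPre d u (vertexStabSet d G w)))
        / μ (Subtype.val ⁻¹' secPre d u (vertexStabSet d G w) ∩ Subtype.val ⁻¹' (G : Set (AutT d)))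
      = μ (Subtype.val ⁻¹' coneSet d G n A) * μ (Subtype.val ⁻¹' coneSet d G m B) := by
  obtain ⟨⟨hss, hlt, hfr⟩, hstab, hdelay⟩ := hmix
  subst hv
  have hd1 : 1 ≤ d := le_trans (by norm_num) hd
  have hsme : SectModEq d G n m (u ++ w) := hdelay m hm n hn (u ++ w) hlen
  set Kn : ℝ≥0∞ := ((tr d n '' (G : Set (AutT d))).ncard : ℝ≥0∞) with hKn
  set Km : ℝ≥0∞ := ((tr d m '' (G : Set (AutT d))).ncard : ℝ≥0∞) with hKm
  set nA : ℝ≥0∞ := ((tr d n '' A).ncard : ℝ≥0∞) with hnA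
  set nB : ℝ≥0∞ := ((tr d m '' B).ncard : ℝ≥0∞) with hnB
  set DL : ℝ≥0∞ := (({l : V d | l.length = w.length}).ncard : ℝ≥0∞) with hDL
  set cn : ℝ≥0∞ := μ (clsSet G n 1) with hcn
  set cm : ℝ≥0∞ := μ (clsSet G m 1) with hcm
  set s : ℝ≥0∞ := μ {x : ↥G | ev x w = w} with hs
  set y : ℝ≥0∞ := μ (clsSet G n 1 ∩ {x : ↥G | ev x (u ++ w) = u ++ w}) with hy0
  set z : ℝ≥0∞ := μ (clsSet G n 1 ∩ {x : ↥G | ev x (u ++ w) = u ++ w}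
    ∩ {x : ↥G | truncEq d m (sectionAt (x : AutT d) (u ++ w)) 1}) with hz0
  have f1 : Kn * cn = 1 := mu_univ_eq μ n
  have f2 : Km * cm = 1 := mu_univ_eq μ m
  have f3 : DL * s = 1 := mu_stab μ hlt w
  have f4 : cn = DL * y := cls_partition_fib μ hd1 hstab hn hu w
  have f5 : y = Km * z := Z_partition μ hd1 hss hsme
  have hEA : μ (Subtype.val ⁻¹' coneSet d G n A) = nA * cn := mu_cone μ n A hA
  have hEB : μ (Subtype.val ⁻¹' coneSet d G m B) = nB * cm := mu_cone μ m B hB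
  have hStw : μ (Subtype.val ⁻¹' vertexStabSet d G w) = s := by
    rw [preim_vertexStab]
  have hz : z = y * cm := by
    rw [f5, show Km * z * cm = Km * cm * z by ring, f2, one_mul]
  have hy : y = cn * s := by
    rw [f4, show DL * y * s = DL * s * y by ring, f3, one_mul]
  have hE : μ (Subtype.val ⁻¹' (coneSet d G n A ∩ secPre d (u ++ w) (coneSet d G m B) ∩
        secPre d u (vertexStabSet d G w))) = nA * (nB * z) := by
    rw [preim_E_eq hss n m u w A B]
    exact measure_biUnion_trace μ n A _
      (fun a _ => (meas_clsSet n a).inter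
        ((meas_Fcond u w).inter (meas_Bcond m (u ++ w) B)))
      (fun a _ a' _ h => by rw [clsSet_congr h])
      (fun a _ a' _ h => Disjoint.mono Set.inter_subset_left Set.inter_subset_left
        (clsSet_disjoint h))
      (nB * z)
      (fun a ha => mu_piece μ hd1 hss hstab hn hu hsme B hB (hA ha))
  have hD : μ (Subtype.val ⁻¹' secPre d u (vertexStabSet d G w)) = s := by
    rw [preim_ED_eq hss n m u w]
    have := measure_biUnion_trace μ n (G : Set (AutT d)) _
      (fun a _ => (meas_clsSet n a).inter
        ((meas_Fcond u w).inter (meas_Bcond m (u ++ w) (G : Set (AutT d)))))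
      (fun a _ a' _ h => by rw [clsSet_congr h])
      (fun a _ a' _ h => Disjoint.mono Set.inter_subset_left Set.inter_subset_left
        (clsSet_disjoint h))
      (Km * z)
      (fun a ha => mu_piece μ hd1 hss hstab hn hu hsme (G : Set (AutT d))
        subset_rfl ha)
    rw [this, hz, hy]
    calc Kn * (Km * (cn * s * cm)) = (Kn * cn) * ((Km * cm) * s) := by ring
    _ = s := by rw [f1, f2, one_mul, one_mul]
  have hs0 : s ≠ 0 := by
    intro h0
    rw [h0, mul_zero] at f3
    exact one_ne_zero f3.symm
  have hstop : s ≠ ⊤ := by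
    rw [hs]
    exact measure_ne_top μ _
  constructor
  · rw [hE, hEA, hEB, hStw, hz, hy]
    ring
  · rw [preim_G_univ, Set.inter_univ, hE, hEA, hEB, hD, hz, hy]
    have harith : nA * (nB * (cn * s * cm)) = (nA * cn * (nB * cm)) * s := by ring
    rw [harith, mul_div_assoc, ENNReal.div_self hs0 hstop, mul_one]

end ArbGal
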